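/- Assume (k₁, k₂, k₃) = (k, 2−k, 0) and that the multiset {k, 2−k, 0} is not equal to {−2, 0, 4}. Let w = (0, 0, 0, 0, 0, x⁻¹) (components in the order (a₁₂, a₁₃, a₂₃, b₁, b₂, b₃)). Then E(w) ∈ B, F(w) ∈ B, w ∉ B, and for every z ∈ V with E(z) ∈ B, F(z) ∈ B and z ∉ B there exists A ∈ G such that Int A(w) − z ∈ B. In other words, there exists a unique up to isomorphism 𝔰-even-homogeneous non-split supermanifold with retract (k, 2−k, 0), corresponding to the class of w. -/

import Mathlib

noncomputable section

open LaurentPolynomial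

/-- `L = ℂ[x, x⁻¹]`, the Laurent polynomials over `ℂ`. -/
abbrev L : Type := LaurentPolynomial ℂ

/-- The coefficient of `x^n` in a Laurent polynomial. -/
def coeffL (p : L) (n : ℤ) : ℂ := (AddMonoidAlgebra.coeff p) n

lemma coeffL_zero (n : ℤ) : coeffL 0 n = 0 := rfl

lemma coeffL_add (a b : L) (n : ℤ) : coeffL (a + b) n = coeffL a n + coeffL b n := by
  unfold coeffL; erw [Finsupp.add_apply]; rfl

lemma coeffL_smul (c : ℂ) (a : L) (n : ℤ) : coeffL (c • a) n = c * coeffL a n := by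
  unfold coeffL; erw [Finsupp.smul_apply]; rfl

/-- `L₊`: Laurent polynomials involving only nonnegative powers of `x`. -/
def Lplus : Submodule ℂ L where
  carrier := {p | ∀ n : ℤ, n < 0 → coeffL p n = 0}
  zero_mem' := fun n _ => coeffL_zero n
  add_mem' := by intro a b ha hb n hn; rw [coeffL_add, ha n hn, hb n hn, add_zero]
  smul_mem' := by intro c p hp n hn; rw [coeffL_smul, hp n hn, mul_zero]

/-- `L₋`: Laurent polynomials involving only nonpositive powers of `x`. -/
def Lminus : Submodule ℂ L where
  carrier := {p | ∀ n : ℤ, 0 < n → coeffL p n = 0}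
  zero_mem' := fun n _ => coeffL_zero n
  add_mem' := by intro a b ha hb n hn; rw [coeffL_add, ha n hn, hb n hn, add_zero]
  smul_mem' := by intro c p hp n hn; rw [coeffL_smul, hp n hn, mul_zero]

/-- The derivative `d/dx` on Laurent polynomials. -/
def D (p : L) : L := Finsupp.sum (AddMonoidAlgebra.coeff p) fun n a => ((n : ℂ) * a) • T (n - 1)

/-- `V = L⁶`, the model of Čech 1-cochains with values in `T₂`: a tuple
`v = (a₁₂, a₁₃, a₂₃, b₁, b₂, b₃)` (components `v 0, …, v 5`) encodes the
vector field `Σ_{i<j} a_{ij}(x)ξᵢξⱼ∂/∂x + Σ_t b_t(x)ξ₁ξ₂ξ₃∂/∂ξ_t` on `U₀ ∩ U₁`. -/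
abbrev V : Type := Fin 6 → L

/-- `B₀ = (L₊)⁶`: cochains holomorphic in `U₀`. -/
def B0 : Submodule ℂ V := Submodule.pi Set.univ fun _ => Lplus

/-- The linear map `v ↦ x^m · (v i)`. -/
def cndA (m : ℤ) (i : Fin 6) : V →ₗ[ℂ] L :=
  (LinearMap.mulLeft ℂ (T m)).comp (LinearMap.proj i)

/-- The linear map `v ↦ x^m · (v i − c·x⁻¹·(v j))`. -/
def cndB (m : ℤ) (c : ℂ) (i j : Fin 6) : V →ₗ[ℂ] L :=
  (LinearMap.mulLeft ℂ (T m)).comp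
    (LinearMap.proj i - c • (LinearMap.mulLeft ℂ (T (-1))).comp (LinearMap.proj j))

/-- `B₁`: cochains holomorphic in `U₁`, i.e. `v` with
`x^(kᵢ+kⱼ−2)·a_{ij} ∈ L₋` for all `i < j` and
`x^(d−k_t)·(b_t − σ_t·k_t·x⁻¹·a_{(t)}) ∈ L₋` for `t = 1, 2, 3`
(σ₁ = 1, σ₂ = −1, σ₃ = 1, a₍₁₎ = a₂₃, a₍₂₎ = a₁₃, a₍₃₎ = a₁₂, d = k₁+k₂+k₃). -/
def B1 (k1 k2 k3 : ℤ) : Submodule ℂ V :=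
  Lminus.comap (cndA (k1 + k2 - 2) 0) ⊓
  Lminus.comap (cndA (k1 + k3 - 2) 1) ⊓
  Lminus.comap (cndA (k2 + k3 - 2) 2) ⊓
  Lminus.comap (cndB (k2 + k3) ((k1 : ℂ)) 3 2) ⊓
  Lminus.comap (cndB (k1 + k3) (-(k2 : ℂ)) 4 1) ⊓
  Lminus.comap (cndB (k1 + k2) ((k3 : ℂ)) 5 0)

/-- The coboundary subspace `B = B₀ + B₁`. -/
def B (k1 k2 k3 : ℤ) : Submodule ℂ V := B0 ⊔ B1 k1 k2 k3

/-- Action of `e = ∂/∂x` on cocycles: the componentwise derivative. -/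
def Eop : V → V := fun v i => D (v i)

/-- Action of `f = ∂/∂y` on cocycles, with components
`a_{ij} ↦ (2 − kᵢ − kⱼ)·x·a_{ij} − x²·a_{ij}′` and
`b_t ↦ σ_t·k_t·a₍ₜ₎ − (d − k_t)·x·b_t − x²·b_t′`. -/
def Fop (k1 k2 k3 : ℤ) : V → V := fun v =>
  ![((2 - k1 - k2 : ℤ) : ℂ) • (T 1 * v 0) - T 2 * D (v 0),
    ((2 - k1 - k3 : ℤ) : ℂ) • (T 1 * v 1) - T 2 * D (v 1),
    ((2 - k2 - k3 : ℤ) : ℂ) • (T 1 * v 2) - T 2 * D (v 2),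
    (k1 : ℂ) • v 2 - ((k2 + k3 : ℤ) : ℂ) • (T 1 * v 3) - T 2 * D (v 3),
    -((k2 : ℂ) • v 1) - ((k1 + k3 : ℤ) : ℂ) • (T 1 * v 4) - T 2 * D (v 4),
    (k3 : ℂ) • v 0 - ((k1 + k2 : ℤ) : ℂ) • (T 1 * v 5) - T 2 * D (v 5)]

/-- `N(v) = (0, 0, a₁₃, −b₂, 0, 0)`; `e′ = ∂/∂x + ξ₂∂/∂ξ₁` acts by `E′ = E + N`. -/
def Nop : V → V := fun v => ![0, 0, v 1, -v 4, 0, 0]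

/-- `M(v) = (0, a₂₃, 0, 0, −b₁, 0)`; `f′ = ∂/∂y + η₁∂/∂η₂` acts by `F′ = F + M`. -/
def Mop : V → V := fun v => ![0, v 2, 0, 0, -v 3, 0]

/-- The action `E′ = E + N` of `e′ = ∂/∂x + ξ₂∂/∂ξ₁`. -/
def E'op : V → V := fun v => Eop v + Nop v

/-- The action `F′ = F + M` of `f′ = ∂/∂y + η₁∂/∂η₂`. -/
def F'op (k1 k2 k3 : ℤ) : V → V := fun v => Fop k1 k2 k3 v + Mop v

/-- `N″(v) = (0, a₁₂, a₁₃, −b₂, −b₃, 0)`;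
`e″ = ∂/∂x + ξ₂∂/∂ξ₁ + ξ₃∂/∂ξ₂` acts by `E″ = E + N″`. -/
def N''op : V → V := fun v => ![0, v 0, v 1, -v 4, -v 5, 0]

/-- `M″(v) = (2a₁₃, 2a₂₃, 0, 0, −2b₁, −2b₂)`;
`f″ = ∂/∂y + 2η₁∂/∂η₂ + 2η₂∂/∂η₃` acts by `F″ = F + M″`. -/
def M''op : V → V := fun v => ![(2 : ℂ) • v 1, (2 : ℂ) • v 2, 0, 0, -((2 : ℂ) • v 3), -((2 : ℂ) • v 4)]

/-- The action `E″ = E + N″` of `e″`. -/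
def E''op : V → V := fun v => Eop v + N''op v

/-- The action `F″ = F + M″` of `f″`. -/
def F''op (k1 k2 k3 : ℤ) : V → V := fun v => Fop k1 k2 k3 v + M''op v

/-- `f` is a polynomial in `x` of degree at most `m` (in particular `f = 0`
when `m < 0`). -/
def degOK (m : ℤ) (f : L) : Prop := ∀ n : ℤ, n < 0 ∨ m < n → coeffL f n = 0

/-- The group `G = Aut E` of invertible `3×3` matrices `A = (A_{pq}(x))` whose
entry `A_{pq}` is a polynomial in `x` of degree at most `k q − k p` (and `0`
if `k q < k p`), and whose inverse has entries of the same form. -/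
structure GElt (k : Fin 3 → ℤ) where
  A : Matrix (Fin 3) (Fin 3) L
  Ainv : Matrix (Fin 3) (Fin 3) L
  mul_inv : A * Ainv = 1
  inv_mul : Ainv * A = 1
  degA : ∀ p q, degOK (k q - k p) (A p q)
  degAinv : ∀ p q, degOK (k q - k p) (Ainv p q)

/-- The action `Int A` of `G` on `V`:
`â_{pq} = Σ_{i<j} (A_{pi}A_{qj} − A_{qi}A_{pj})·a_{ij}` for `p < q`, and
`b̂_u = det(A)·(Σ_t β_{tu}·b_t + Σ_{i<j} σ_{l(ij)}·(β_{l(ij),u})′·a_{ij})`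
where `β = A⁻¹` and `l(ij)` is the index complementary to `{i, j}`. -/
def IntAct {k : Fin 3 → ℤ} (g : GElt k) (v : V) : V :=
  let A := g.A
  let β := g.Ainv
  ![(A 0 0 * A 1 1 - A 1 0 * A 0 1) * v 0 + (A 0 0 * A 1 2 - A 1 0 * A 0 2) * v 1 +
      (A 0 1 * A 1 2 - A 1 1 * A 0 2) * v 2,
    (A 0 0 * A 2 1 - A 2 0 * A 0 1) * v 0 + (A 0 0 * A 2 2 - A 2 0 * A 0 2) * v 1 +
      (A 0 1 * A 2 2 - A 2 1 * A 0 2) * v 2,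
    (A 1 0 * A 2 1 - A 2 0 * A 1 1) * v 0 + (A 1 0 * A 2 2 - A 2 0 * A 1 2) * v 1 +
      (A 1 1 * A 2 2 - A 2 1 * A 1 2) * v 2,
    A.det * (β 0 0 * v 3 + β 1 0 * v 4 + β 2 0 * v 5 +
      D (β 2 0) * v 0 - D (β 1 0) * v 1 + D (β 0 0) * v 2),
    A.det * (β 0 1 * v 3 + β 1 1 * v 4 + β 2 1 * v 5 +
      D (β 2 1) * v 0 - D (β 1 1) * v 1 + D (β 0 1) * v 2),
    A.det * (β 0 2 * v 3 + β 1 2 * v 4 + β 2 2 * v 5 +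
      D (β 2 2) * v 0 - D (β 1 2) * v 1 + D (β 0 2) * v 2)]

/-! ### Auxiliary lemmas -/

lemma coeffL_T (m n : ℤ) : coeffL (T m) n = if m = n then 1 else 0 := T_apply n m

lemma coeffL_T_mul (m : ℤ) (f : L) (n : ℤ) : coeffL (T m * f) n = coeffL f (n - m) := by
  unfold coeffL
  erw [AddMonoidAlgebra.coeff_single_mul_apply f (1:ℂ) m n, one_mul]
  congr 1; ring

lemma coeffL_neg (a : L) (n : ℤ) : coeffL (-a) n = - coeffL a n := by
  unfold coeffL; erw [Finsupp.neg_apply]; rfl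

lemma coeffL_sub (a b : L) (n : ℤ) : coeffL (a - b) n = coeffL a n - coeffL b n := by
  unfold coeffL; erw [Finsupp.sub_apply]; rfl

lemma L_ext {f g : L} (h : ∀ n, coeffL f n = coeffL g n) : f = g := AddMonoidAlgebra.ext (Finsupp.ext h)

lemma coeffL_smulsum (f : ℤ →₀ ℂ) (g : ℤ → ℂ → L) (n : ℤ) :
    coeffL (Finsupp.sum f g) n = Finsupp.sum f (fun i a => coeffL (g i a) n) := by
  unfold coeffL
  rw [AddMonoidAlgebra.coeff_finsuppSum]
  exact Finsupp.finset_sum_apply _ _ _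

lemma coeffL_D (f : L) (n : ℤ) : coeffL (D f) n = ((n + 1 : ℤ) : ℂ) * coeffL f (n + 1) := by
  unfold D
  rw [coeffL_smulsum, Finsupp.sum, Finset.sum_eq_single (n+1)]
  · rw [coeffL_smul, coeffL_T]
    simp [coeffL]
  · intro b _ hb
    rw [coeffL_smul, coeffL_T, if_neg (by omega), mul_zero]
  · intro h
    have : AddMonoidAlgebra.coeff f (n+1) = 0 := Finsupp.notMem_support_iff.mp h
    rw [coeffL_smul, this]
    simp

lemma mem_B0_iff {v : V} : v ∈ B0 ↔ ∀ i, ∀ n : ℤ, n < 0 → coeffL (v i) n = 0 := by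
  constructor
  · intro h i
    exact (Submodule.mem_pi.mp h) i trivial
  · intro h
    exact Submodule.mem_pi.mpr fun i _ => h i

lemma lminus_Tmul {m : ℤ} {f : L} : (T m * f ∈ Lminus) ↔ ∀ p : ℤ, -m < p → coeffL f p = 0 := by
  constructor
  · intro h p hp
    have := h (p + m) (by omega)
    rwa [coeffL_T_mul, add_sub_cancel_right] at this
  · intro h n hn
    rw [coeffL_T_mul]; exact h _ (by omega)

lemma cndA_apply (m : ℤ) (i : Fin 6) (v : V) : cndA m i v = T m * v i := rfl

lemma cndB_apply (m : ℤ) (c : ℂ) (i j : Fin 6) (v : V) :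
    cndB m c i j v = T m * (v i - c • (T (-1) * v j)) := rfl

lemma mem_B1_iff {k1 k2 k3 : ℤ} {v : V} : v ∈ B1 k1 k2 k3 ↔
    (∀ n : ℤ, 2 - k1 - k2 < n → coeffL (v 0) n = 0) ∧
    (∀ n : ℤ, 2 - k1 - k3 < n → coeffL (v 1) n = 0) ∧
    (∀ n : ℤ, 2 - k2 - k3 < n → coeffL (v 2) n = 0) ∧
    (∀ n : ℤ, -(k2 + k3) < n → coeffL (v 3) n - (k1 : ℂ) * coeffL (v 2) (n + 1) = 0) ∧
    (∀ n : ℤ, -(k1 + k3) < n → coeffL (v 4) n + (k2 : ℂ) * coeffL (v 1) (n + 1) = 0) ∧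
    (∀ n : ℤ, -(k1 + k2) < n → coeffL (v 5) n - (k3 : ℂ) * coeffL (v 0) (n + 1) = 0) := by
  have hs : ∀ (c : ℂ) (i j : Fin 6) (p : ℤ),
      coeffL (v i - c • (T (-1) * v j)) p = coeffL (v i) p - c * coeffL (v j) (p + 1) := by
    intro c i j p
    rw [coeffL_sub, coeffL_smul, coeffL_T_mul, sub_neg_eq_add]
  unfold B1
  simp only [Submodule.mem_inf, Submodule.mem_comap, cndA_apply, cndB_apply, lminus_Tmul, hs]
  constructor
  · rintro ⟨⟨⟨⟨⟨h0, h1⟩, h2⟩, h3⟩, h4⟩, h5⟩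
    refine ⟨fun n hn => h0 n (by omega), fun n hn => h1 n (by omega),
      fun n hn => h2 n (by omega), fun n hn => h3 n (by omega),
      fun n hn => ?_, fun n hn => h5 n (by omega)⟩
    have := h4 n (by omega)
    linear_combination this
  · rintro ⟨h0, h1, h2, h3, h4, h5⟩
    refine ⟨⟨⟨⟨⟨fun n hn => h0 n (by omega), fun n hn => h1 n (by omega)⟩,
      fun n hn => h2 n (by omega)⟩, fun n hn => h3 n (by omega)⟩,
      fun n hn => ?_⟩, fun n hn => h5 n (by omega)⟩
    have := h4 n (by omega)
    linear_combination this

/-- negative part of a Laurent polynomial -/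
def negp (f : L) : L := AddMonoidAlgebra.ofCoeff ((AddMonoidAlgebra.coeff f).filter (fun n => n < 0))

/-- nonnegative part of a Laurent polynomial -/
def posp (f : L) : L := AddMonoidAlgebra.ofCoeff ((AddMonoidAlgebra.coeff f).filter (fun n => ¬ n < 0))

lemma coeffL_negp (f : L) (n : ℤ) : coeffL (negp f) n = if n < 0 then coeffL f n else 0 := by
  unfold negp coeffL
  rw [AddMonoidAlgebra.coeff_ofCoeff]
  erw [Finsupp.filter_apply]

lemma coeffL_posp (f : L) (n : ℤ) : coeffL (posp f) n = if n < 0 then 0 else coeffL f n := by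
  unfold posp coeffL
  rw [AddMonoidAlgebra.coeff_ofCoeff]
  erw [Finsupp.filter_apply]
  by_cases h : n < 0 <;> simp [h]


lemma posp_add_negp (f : L) : posp f + negp f = f := by
  apply L_ext; intro n
  rw [coeffL_add, coeffL_posp, coeffL_negp]
  by_cases h : n < 0 <;> simp [h]

/-! ### Sufficient condition for membership in `B k (2-k) 0` -/

lemma mem_B_suff (k : ℤ) (v : V)
    (h1 : ∀ n : ℤ, 2 - k < n → n < 0 → coeffL (v 1) n = 0)
    (h2 : ∀ n : ℤ, k < n → n < 0 → coeffL (v 2) n = 0)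
    (h3 : ∀ n : ℤ, k - 2 < n → n < 0 →
      coeffL (v 3) n = (k : ℂ) * (if n + 1 < 0 then coeffL (v 2) (n + 1) else 0))
    (h4 : ∀ n : ℤ, -k < n → n < 0 →
      coeffL (v 4) n = -(((2 - k : ℤ)) : ℂ) * (if n + 1 < 0 then coeffL (v 1) (n + 1) else 0))
    (h5 : coeffL (v 5) (-1) = 0) :
    v ∈ B k (2 - k) 0 := by
  rw [B, Submodule.mem_sup]
  refine ⟨fun i => posp (v i), ?_, fun i => negp (v i), ?_, ?_⟩
  · rw [mem_B0_iff]
    intro i n hn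
    rw [coeffL_posp, if_pos hn]
  · rw [mem_B1_iff]
    refine ⟨?_, ?_, ?_, ?_, ?_, ?_⟩
    · intro n hn
      rw [coeffL_negp, if_neg (by omega)]
    · intro n hn
      rw [coeffL_negp]
      by_cases hneg : n < 0
      · rw [if_pos hneg]
        exact h1 n (by omega) hneg
      · rw [if_neg hneg]
    · intro n hn
      rw [coeffL_negp]
      by_cases hneg : n < 0
      · rw [if_pos hneg]
        exact h2 n (by omega) hneg
      · rw [if_neg hneg]
    · intro n hn
      rw [coeffL_negp, coeffL_negp]
      by_cases hneg : n < 0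
      · rw [if_pos hneg, h3 n (by omega) hneg]
        by_cases h' : n + 1 < 0 <;> simp [h']
      · rw [if_neg hneg, if_neg (by omega)]
        ring
    · intro n hn
      rw [coeffL_negp, coeffL_negp]
      by_cases hneg : n < 0
      · rw [if_pos hneg, h4 n (by omega) hneg]
        by_cases h' : n + 1 < 0 <;> simp [h'] <;> ring
      · rw [if_neg hneg, if_neg (by omega)]
        ring
    · intro n hn
      rw [coeffL_negp]
      by_cases hneg : n < 0
      · rw [if_pos hneg]
        have : n = -1 := by omega
        subst this
        rw [h5]
        simp
      · rw [if_neg hneg]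
        simp
  · funext i
    exact posp_add_negp (v i)

/-! ### Necessary conditions from membership in `B k (2-k) 0` -/

lemma coeff_decomp {p q v : V} (hpq : p + q = v) (i : Fin 6) (n : ℤ) :
    coeffL (v i) n = coeffL (p i) n + coeffL (q i) n := by
  rw [← hpq]
  exact coeffL_add _ _ _

lemma nec_coeff5 {k : ℤ} {v : V} (hv : v ∈ B k (2 - k) 0) : coeffL (v 5) (-1) = 0 := by
  obtain ⟨p, hp, q, hq, hpq⟩ := Submodule.mem_sup.mp hv
  rw [mem_B0_iff] at hp
  rw [mem_B1_iff] at hq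
  have h := hq.2.2.2.2.2 (-1) (by omega)
  rw [coeff_decomp hpq 5 (-1), hp 5 (-1) (by omega)]
  push_cast at h
  linear_combination h

lemma nec_coeff2 {k : ℤ} {v : V} (hv : v ∈ B k (2 - k) 0) :
    ∀ n : ℤ, k < n → n < 0 → coeffL (v 2) n = 0 := by
  obtain ⟨p, hp, q, hq, hpq⟩ := Submodule.mem_sup.mp hv
  rw [mem_B0_iff] at hp
  rw [mem_B1_iff] at hq
  intro n h1 h2
  rw [coeff_decomp hpq 2 n, hp 2 n h2, hq.2.2.1 n (by omega), add_zero]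

lemma nec_coeff1 {k : ℤ} {v : V} (hv : v ∈ B k (2 - k) 0) :
    ∀ n : ℤ, 2 - k < n → n < 0 → coeffL (v 1) n = 0 := by
  obtain ⟨p, hp, q, hq, hpq⟩ := Submodule.mem_sup.mp hv
  rw [mem_B0_iff] at hp
  rw [mem_B1_iff] at hq
  intro n h1 h2
  rw [coeff_decomp hpq 1 n, hp 1 n h2, hq.2.1 n (by omega), add_zero]

lemma nec_coeff3 {k : ℤ} (hk : k ≤ 0) {v : V} (hv : v ∈ B k (2 - k) 0) :
    ∀ n : ℤ, k - 2 < n → n < 0 →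
      coeffL (v 3) n = (k : ℂ) * (if n + 1 < 0 then coeffL (v 2) (n + 1) else 0) := by
  obtain ⟨p, hp, q, hq, hpq⟩ := Submodule.mem_sup.mp hv
  rw [mem_B0_iff] at hp
  rw [mem_B1_iff] at hq
  intro n h1 h2
  have h := hq.2.2.2.1 n (by omega)
  have hv3 : coeffL (v 3) n = coeffL (q 3) n := by
    rw [coeff_decomp hpq 3 n, hp 3 n h2, zero_add]
  rw [hv3]
  by_cases h' : n + 1 < 0
  · rw [if_pos h']
    have hv2 : coeffL (v 2) (n + 1) = coeffL (q 2) (n + 1) := by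
      rw [coeff_decomp hpq 2 (n + 1), hp 2 (n + 1) h', zero_add]
    rw [hv2]
    linear_combination h
  · rw [if_neg h', mul_zero]
    -- here n = -1, n + 1 = 0
    rcases eq_or_lt_of_le hk with hk0 | hkneg
    · subst hk0
      push_cast at h ⊢
      linear_combination h
    · have hq2 : coeffL (q 2) (n + 1) = 0 := hq.2.2.1 (n + 1) (by omega)
      rw [hq2, mul_zero] at h
      linear_combination h

lemma nec_coeff4 {k : ℤ} (hk : 2 ≤ k) {v : V} (hv : v ∈ B k (2 - k) 0) :
    ∀ n : ℤ, -k < n → n < 0 →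
      coeffL (v 4) n = -(((2 - k : ℤ)) : ℂ) * (if n + 1 < 0 then coeffL (v 1) (n + 1) else 0) := by
  obtain ⟨p, hp, q, hq, hpq⟩ := Submodule.mem_sup.mp hv
  rw [mem_B0_iff] at hp
  rw [mem_B1_iff] at hq
  intro n h1 h2
  have h := hq.2.2.2.2.1 n (by omega)
  have hv4 : coeffL (v 4) n = coeffL (q 4) n := by
    rw [coeff_decomp hpq 4 n, hp 4 n h2, zero_add]
  rw [hv4]
  by_cases h' : n + 1 < 0
  · rw [if_pos h']
    have hv1 : coeffL (v 1) (n + 1) = coeffL (q 1) (n + 1) := by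
      rw [coeff_decomp hpq 1 (n + 1), hp 1 (n + 1) h', zero_add]
    rw [hv1]
    push_cast at h ⊢
    linear_combination h
  · rw [if_neg h', mul_zero]
    rcases eq_or_lt_of_le hk with hk0 | hkpos
    · have h0 : ((2 - k : ℤ) : ℂ) = 0 := by rw [← hk0]; simp
      rw [h0] at h
      linear_combination h
    · have hq1 : coeffL (q 1) (n + 1) = 0 := hq.2.1 (n + 1) (by omega)
      rw [hq1, mul_zero, add_zero] at h
      exact h

/-! ### Coefficients of `Eop` and `Fop` -/

lemma coeff_Eop (z : V) (i : Fin 6) (n : ℤ) :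
    coeffL (Eop z i) n = ((n + 1 : ℤ) : ℂ) * coeffL (z i) (n + 1) := coeffL_D _ _

lemma coeff_F0 (k1 k2 k3 : ℤ) (z : V) (n : ℤ) :
    coeffL (Fop k1 k2 k3 z 0) n = ((2 - k1 - k2 - n + 1 : ℤ) : ℂ) * coeffL (z 0) (n - 1) := by
  have h : Fop k1 k2 k3 z 0 = ((2 - k1 - k2 : ℤ) : ℂ) • (T 1 * z 0) - T 2 * D (z 0) := rfl
  rw [h, coeffL_sub, coeffL_smul, coeffL_T_mul, coeffL_T_mul, coeffL_D]
  have e : n - 2 + 1 = n - 1 := by ring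
  rw [e]
  push_cast
  ring

lemma coeff_F1 (k1 k2 k3 : ℤ) (z : V) (n : ℤ) :
    coeffL (Fop k1 k2 k3 z 1) n = ((2 - k1 - k3 - n + 1 : ℤ) : ℂ) * coeffL (z 1) (n - 1) := by
  have h : Fop k1 k2 k3 z 1 = ((2 - k1 - k3 : ℤ) : ℂ) • (T 1 * z 1) - T 2 * D (z 1) := rfl
  rw [h, coeffL_sub, coeffL_smul, coeffL_T_mul, coeffL_T_mul, coeffL_D]
  have e : n - 2 + 1 = n - 1 := by ring
  rw [e]
  push_cast
  ring

lemma coeff_F2 (k1 k2 k3 : ℤ) (z : V) (n : ℤ) :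
    coeffL (Fop k1 k2 k3 z 2) n = ((2 - k2 - k3 - n + 1 : ℤ) : ℂ) * coeffL (z 2) (n - 1) := by
  have h : Fop k1 k2 k3 z 2 = ((2 - k2 - k3 : ℤ) : ℂ) • (T 1 * z 2) - T 2 * D (z 2) := rfl
  rw [h, coeffL_sub, coeffL_smul, coeffL_T_mul, coeffL_T_mul, coeffL_D]
  have e : n - 2 + 1 = n - 1 := by ring
  rw [e]
  push_cast
  ring

lemma coeff_F3 (k1 k2 k3 : ℤ) (z : V) (n : ℤ) :
    coeffL (Fop k1 k2 k3 z 3) n =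
      (k1 : ℂ) * coeffL (z 2) n - ((k2 + k3 + n - 1 : ℤ) : ℂ) * coeffL (z 3) (n - 1) := by
  have h : Fop k1 k2 k3 z 3 =
      (k1 : ℂ) • z 2 - ((k2 + k3 : ℤ) : ℂ) • (T 1 * z 3) - T 2 * D (z 3) := rfl
  rw [h, coeffL_sub, coeffL_sub, coeffL_smul, coeffL_smul, coeffL_T_mul, coeffL_T_mul, coeffL_D]
  have e : n - 2 + 1 = n - 1 := by ring
  rw [e]
  push_cast
  ring

lemma coeff_F4 (k1 k2 k3 : ℤ) (z : V) (n : ℤ) :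
    coeffL (Fop k1 k2 k3 z 4) n =
      -(k2 : ℂ) * coeffL (z 1) n - ((k1 + k3 + n - 1 : ℤ) : ℂ) * coeffL (z 4) (n - 1) := by
  have h : Fop k1 k2 k3 z 4 =
      -((k2 : ℂ) • z 1) - ((k1 + k3 : ℤ) : ℂ) • (T 1 * z 4) - T 2 * D (z 4) := rfl
  rw [h, coeffL_sub, coeffL_sub, coeffL_neg, coeffL_smul, coeffL_smul, coeffL_T_mul,
    coeffL_T_mul, coeffL_D]
  have e : n - 2 + 1 = n - 1 := by ring
  rw [e]
  push_cast
  ring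

lemma coeff_F5 (k1 k2 k3 : ℤ) (z : V) (n : ℤ) :
    coeffL (Fop k1 k2 k3 z 5) n =
      (k3 : ℂ) * coeffL (z 0) n - ((k1 + k2 + n - 1 : ℤ) : ℂ) * coeffL (z 5) (n - 1) := by
  have h : Fop k1 k2 k3 z 5 =
      (k3 : ℂ) • z 0 - ((k1 + k2 : ℤ) : ℂ) • (T 1 * z 5) - T 2 * D (z 5) := rfl
  rw [h, coeffL_sub, coeffL_sub, coeffL_smul, coeffL_smul, coeffL_T_mul, coeffL_T_mul, coeffL_D]
  have e : n - 2 + 1 = n - 1 := by ring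
  rw [e]
  push_cast
  ring

lemma cast_mul_eq_zero {c : ℤ} (hc : c ≠ 0) {x : ℂ} (h : (c : ℂ) * x = 0) : x = 0 := by
  rcases mul_eq_zero.mp h with h' | h'
  · exact absurd (Int.cast_eq_zero.mp h') hc
  · exact h'

/-! ### The invariance analysis in the sector `(a₂₃, b₁)` (relevant for `k ≤ -1`) -/

lemma sector1 {k : ℤ} (hk1 : k ≤ -1) (hk2 : k ≠ -2) {z : V}
    (hE : Eop z ∈ B k (2 - k) 0) (hF : Fop k (2 - k) 0 z ∈ B k (2 - k) 0) :
    (∀ n : ℤ, k < n → n < 0 → coeffL (z 2) n = 0) ∧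
    (∀ n : ℤ, k - 2 < n → n < 0 →
      coeffL (z 3) n = (k : ℂ) * (if n + 1 < 0 then coeffL (z 2) (n + 1) else 0)) := by
  have hA : ∀ n : ℤ, k < n → n < 0 → coeffL (z 2) n = 0 := by
    intro n h1 h2
    by_cases hn : n ≤ -2
    · have h := nec_coeff2 hF (n + 1) (by omega) (by omega)
      rw [coeff_F2] at h
      have e : n + 1 - 1 = n := by ring
      rw [e] at h
      exact cast_mul_eq_zero (by omega) h
    · have hn1 : n = -1 := by omega
      subst hn1
      have h := nec_coeff2 hE (-2) (by omega) (by omega)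
      rw [coeff_Eop] at h
      have e : (-2 : ℤ) + 1 = -1 := by norm_num
      rw [e] at h
      exact cast_mul_eq_zero (by omega) h
  refine ⟨hA, ?_⟩
  intro n h1 h2
  by_cases hn1 : n = -1
  · subst hn1
    rw [if_neg (by omega), mul_zero]
    have h := nec_coeff3 (by omega) hE (-2) (by omega) (by omega)
    rw [if_pos (by omega), coeff_Eop, coeff_Eop] at h
    have e : (-2 : ℤ) + 1 = -1 := by norm_num
    rw [e] at h
    have h' : ((-1 : ℤ) : ℂ) * coeffL (z 3) (-1) = 0 := by
      rw [h]
      push_cast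
      ring
    exact cast_mul_eq_zero (by omega) h'
  · by_cases hnk : n = k - 1
    · subst hnk
      rw [if_pos (by omega)]
      have e3 : k - 1 + 1 = k := by ring
      rw [e3]
      have h := nec_coeff3 (by omega) hF k (by omega) (by omega)
      rw [coeff_F3] at h
      have e : 2 - k + 0 + k - 1 = (1 : ℤ) := by ring
      rw [e] at h
      have hrhs : (if k + 1 < 0 then coeffL (Fop k (2 - k) 0 z 2) (k + 1) else 0) = 0 := by
        by_cases hc : k + 1 < 0
        · rw [if_pos hc, coeff_F2]
          have e2 : 2 - (2 - k) - 0 - (k + 1) + 1 = (0 : ℤ) := by ring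
          rw [e2]
          push_cast
          ring
        · rw [if_neg hc]
      rw [hrhs, mul_zero] at h
      push_cast at h
      linear_combination -h
    · have hkn : k ≤ n ∧ n ≤ -2 := by omega
      rw [if_pos (by omega), hA (n + 1) (by omega) (by omega), mul_zero]
      have h := nec_coeff3 (by omega) hE (n - 1) (by omega) (by omega)
      rw [if_pos (by omega), coeff_Eop, coeff_Eop] at h
      have e : n - 1 + 1 = n := by ring
      rw [e, hA (n + 1) (by omega) (by omega), mul_zero, mul_zero] at h
      exact cast_mul_eq_zero (by omega) h

/-! ### The invariance analysis in the sector `(a₁₃, b₂)` (relevant for `k ≥ 3`) -/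

lemma sector2 {k : ℤ} (hk1 : 3 ≤ k) (hk2 : k ≠ 4) {z : V}
    (hE : Eop z ∈ B k (2 - k) 0) (hF : Fop k (2 - k) 0 z ∈ B k (2 - k) 0) :
    (∀ n : ℤ, 2 - k < n → n < 0 → coeffL (z 1) n = 0) ∧
    (∀ n : ℤ, -k < n → n < 0 →
      coeffL (z 4) n = -(((2 - k : ℤ)) : ℂ) * (if n + 1 < 0 then coeffL (z 1) (n + 1) else 0)) := by
  have hA : ∀ n : ℤ, 2 - k < n → n < 0 → coeffL (z 1) n = 0 := by
    intro n h1 h2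
    by_cases hn : n ≤ -2
    · have h := nec_coeff1 hF (n + 1) (by omega) (by omega)
      rw [coeff_F1] at h
      have e : n + 1 - 1 = n := by ring
      rw [e] at h
      exact cast_mul_eq_zero (by omega) h
    · have hn1 : n = -1 := by omega
      subst hn1
      have h := nec_coeff1 hE (-2) (by omega) (by omega)
      rw [coeff_Eop] at h
      have e : (-2 : ℤ) + 1 = -1 := by norm_num
      rw [e] at h
      exact cast_mul_eq_zero (by omega) h
  refine ⟨hA, ?_⟩
  intro n h1 h2
  by_cases hn1 : n = -1
  · subst hn1
    rw [if_neg (by omega), mul_zero]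
    have h := nec_coeff4 (by omega) hE (-2) (by omega) (by omega)
    rw [if_pos (by omega), coeff_Eop, coeff_Eop] at h
    have e : (-2 : ℤ) + 1 = -1 := by norm_num
    rw [e] at h
    have h' : ((-1 : ℤ) : ℂ) * coeffL (z 4) (-1) = 0 := by
      rw [h]
      push_cast
      ring
    exact cast_mul_eq_zero (by omega) h'
  · by_cases hnk : n = 1 - k
    · subst hnk
      rw [if_pos (by omega)]
      have e3 : 1 - k + 1 = 2 - k := by ring
      rw [e3]
      have h := nec_coeff4 (by omega) hF (2 - k) (by omega) (by omega)
      rw [coeff_F4] at h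
      have e : k + 0 + (2 - k) - 1 = (1 : ℤ) := by ring
      have e4 : 2 - k - 1 = 1 - k := by ring
      rw [e, e4] at h
      have hrhs : (if 2 - k + 1 < 0 then coeffL (Fop k (2 - k) 0 z 1) (2 - k + 1) else 0) = 0 := by
        by_cases hc : 2 - k + 1 < 0
        · rw [if_pos hc, coeff_F1]
          have e2 : 2 - k - 0 - (2 - k + 1) + 1 = (0 : ℤ) := by ring
          rw [e2]
          push_cast
          ring
        · rw [if_neg hc]
      rw [hrhs, mul_zero] at h
      push_cast at h ⊢
      linear_combination -h
    · have hkn : 2 - k ≤ n ∧ n ≤ -2 := by omega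
      rw [if_pos (by omega), hA (n + 1) (by omega) (by omega), mul_zero]
      have h := nec_coeff4 (by omega) hE (n - 1) (by omega) (by omega)
      rw [if_pos (by omega), coeff_Eop, coeff_Eop] at h
      have e : n - 1 + 1 = n := by ring
      rw [e, hA (n + 1) (by omega) (by omega), mul_zero, mul_zero] at h
      exact cast_mul_eq_zero (by omega) h

/-! ### Constructing elements of `G` from constant matrices -/

lemma coeffL_C (c : ℂ) (n : ℤ) : coeffL (C c) n = if (0 : ℤ) = n then c else 0 := by
  have h : (C c : L) = AddMonoidAlgebra.single (0 : ℤ) c := rfl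
  unfold coeffL
  rw [h, AddMonoidAlgebra.coeff_single]
  exact Finsupp.single_apply

lemma degOK_zero (m : ℤ) : degOK m 0 := fun n _ => coeffL_zero n

lemma degOK_C (m : ℤ) (hm : 0 ≤ m) (c : ℂ) : degOK m (C c) := by
  intro n hn
  rw [coeffL_C, if_neg (by omega)]

lemma coeffL_C_mul_T (c : ℂ) (m n : ℤ) : coeffL (C c * T m) n = if m = n then c else 0 := by
  rw [← single_eq_C_mul_T]
  unfold coeffL
  rw [AddMonoidAlgebra.coeff_single]
  exact Finsupp.single_apply

/-- Build an element of `G` from a pair of mutually inverse constant matrices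
respecting the degree bounds. -/
def mkG (kk : Fin 3 → ℤ) (M N : Matrix (Fin 3) (Fin 3) ℂ) (hMN : M * N = 1) (hNM : N * M = 1)
    (hdM : ∀ p q, kk q < kk p → M p q = 0) (hdN : ∀ p q, kk q < kk p → N p q = 0) :
    GElt kk where
  A := M.map C
  Ainv := N.map C
  mul_inv := by rw [← Matrix.map_mul, hMN, Matrix.map_one _ (map_zero C) (map_one C)]
  inv_mul := by rw [← Matrix.map_mul, hNM, Matrix.map_one _ (map_zero C) (map_one C)]
  degA := by
    intro p q
    by_cases h : kk q < kk p
    · rw [Matrix.map_apply, hdM p q h, map_zero]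
      exact degOK_zero _
    · rw [Matrix.map_apply]
      exact degOK_C _ (by omega) _
  degAinv := by
    intro p q
    by_cases h : kk q < kk p
    · rw [Matrix.map_apply, hdN p q h, map_zero]
      exact degOK_zero _
    · rw [Matrix.map_apply]
      exact degOK_C _ (by omega) _

lemma IntAct_w_eq {kk : Fin 3 → ℤ} (g : GElt kk) :
    IntAct g ![0, 0, 0, 0, 0, T (-1)] =
      ![0, 0, 0, g.A.det * (g.Ainv 2 0 * T (-1)), g.A.det * (g.Ainv 2 1 * T (-1)),
        g.A.det * (g.Ainv 2 2 * T (-1))] := by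
  funext i
  fin_cases i <;>
    simp [IntAct, show (![0, 0, 0, 0, 0, T (-1)] : V) 5 = T (-1) from rfl]

lemma IntAct_mkG_w (kk : Fin 3 → ℤ) (M N : Matrix (Fin 3) (Fin 3) ℂ) (hMN : M * N = 1)
    (hNM : N * M = 1) (hdM : ∀ p q, kk q < kk p → M p q = 0)
    (hdN : ∀ p q, kk q < kk p → N p q = 0) :
    IntAct (mkG kk M N hMN hNM hdM hdN) ![0, 0, 0, 0, 0, T (-1)] =
      ![0, 0, 0, C (M.det * N 2 0) * T (-1), C (M.det * N 2 1) * T (-1),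
        C (M.det * N 2 2) * T (-1)] := by
  rw [IntAct_w_eq]
  have hdet : (mkG kk M N hMN hNM hdM hdN).A.det = C M.det := (RingHom.map_det C M).symm
  have hinv : ∀ u : Fin 3, (mkG kk M N hMN hNM hdM hdN).Ainv 2 u = C (N 2 u) := fun u => rfl
  funext i
  fin_cases i <;>
    simp [hdet, hinv, map_mul, mul_assoc]

/-- The final membership: the difference of the standard representative (with coefficients
`c3, c4, c5` in the `b`-slots) and `z` lies in `B`. -/
lemma mem_B_final (k : ℤ) (z : V) (c3 c4 c5 : ℂ)
    (hz1 : ∀ n : ℤ, 2 - k < n → n < 0 → coeffL (z 1) n = 0)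
    (hz2 : ∀ n : ℤ, k < n → n < 0 → coeffL (z 2) n = 0)
    (hz3 : ∀ n : ℤ, k - 2 < n → n < 0 → coeffL (z 3) n - (if n = -1 then c3 else 0) =
        (k : ℂ) * (if n + 1 < 0 then coeffL (z 2) (n + 1) else 0))
    (hz4 : ∀ n : ℤ, -k < n → n < 0 → coeffL (z 4) n - (if n = -1 then c4 else 0) =
        -(((2 - k : ℤ)) : ℂ) * (if n + 1 < 0 then coeffL (z 1) (n + 1) else 0))
    (hz5 : coeffL (z 5) (-1) = c5) :
    (![0, 0, 0, C c3 * T (-1), C c4 * T (-1), C c5 * T (-1)] - z) ∈ B k (2 - k) 0 := by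
  have hsubz : ∀ (P : V) (i : Fin 6) (n : ℤ),
      coeffL ((P - z) i) n = coeffL (P i) n - coeffL (z i) n := fun P i n => coeffL_sub _ _ _
  set P : V := ![0, 0, 0, C c3 * T (-1), C c4 * T (-1), C c5 * T (-1)] with hPdef
  have hP1 : P 1 = 0 := rfl
  have hP2 : P 2 = 0 := rfl
  have hP3 : P 3 = C c3 * T (-1) := rfl
  have hP4 : P 4 = C c4 * T (-1) := rfl
  have hP5 : P 5 = C c5 * T (-1) := rfl
  refine mem_B_suff k _ (fun n h1 h2 => ?_) (fun n h1 h2 => ?_) (fun n h1 h2 => ?_)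
    (fun n h1 h2 => ?_) ?_
  · rw [hsubz, hP1, coeffL_zero, hz1 n h1 h2]
    ring
  · rw [hsubz, hP2, coeffL_zero, hz2 n h1 h2]
    ring
  · rw [hsubz, hP3, coeffL_C_mul_T]
    simp only [hsubz, hP2, coeffL_zero]
    have h := hz3 n h1 h2
    have he : ((if (-1 : ℤ) = n then c3 else 0) : ℂ) = (if n = -1 then c3 else 0) := by
      by_cases hn : n = -1
      · subst hn; simp
      · rw [if_neg (fun hh => hn hh.symm), if_neg hn]
    rw [he]
    by_cases hc : n + 1 < 0
    · rw [if_pos hc] at h ⊢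
      linear_combination -h
    · rw [if_neg hc] at h ⊢
      linear_combination -h
  · rw [hsubz, hP4, coeffL_C_mul_T]
    simp only [hsubz, hP1, coeffL_zero]
    have h := hz4 n h1 h2
    have he : ((if (-1 : ℤ) = n then c4 else 0) : ℂ) = (if n = -1 then c4 else 0) := by
      by_cases hn : n = -1
      · subst hn; simp
      · rw [if_neg (fun hh => hn hh.symm), if_neg hn]
    rw [he]
    by_cases hc : n + 1 < 0
    · rw [if_pos hc] at h ⊢
      linear_combination -h
    · rw [if_neg hc] at h ⊢
      linear_combination -h
  · rw [hsubz, hP5, coeffL_C_mul_T, if_pos rfl, hz5]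
    ring


/-- If `(k₁, k₂, k₃) = (k, 2−k, 0)` and the multiset `{k, 2−k, 0}` is not
`{−2, 0, 4}`, there is a unique up to isomorphism 𝔰-even-homogeneous non-split
supermanifold with retract `(k, 2−k, 0)`, corresponding to the class of
`w = (0, 0, 0, 0, 0, x⁻¹)`. -/
theorem stmt_14 (k k1 k2 k3 : ℤ) (hk1 : k1 = k) (hk2 : k2 = 2 - k) (hk3 : k3 = 0)
    (hmul : ({k, 2 - k, 0} : Multiset ℤ) ≠ ({-2, 0, 4} : Multiset ℤ))
    (w : V) (hw : w = ![0, 0, 0, 0, 0, T (-1)]) :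
    Eop w ∈ B k1 k2 k3 ∧ Fop k1 k2 k3 w ∈ B k1 k2 k3 ∧ w ∉ B k1 k2 k3 ∧
    ∀ z : V, Eop z ∈ B k1 k2 k3 → Fop k1 k2 k3 z ∈ B k1 k2 k3 → z ∉ B k1 k2 k3 →
      ∃ g : GElt ![k1, k2, k3], IntAct g w - z ∈ B k1 k2 k3 := by
  subst hk1; subst hk2; subst hk3; subst hw
  have hkne2 : k1 ≠ -2 := by
    intro h; subst h; exact hmul (by decide)
  have hkne4 : k1 ≠ 4 := by
    intro h; subst h; exact hmul (by decide)
  have hw0 : (![0, 0, 0, 0, 0, T (-1)] : V) 0 = 0 := rfl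
  have hw1 : (![0, 0, 0, 0, 0, T (-1)] : V) 1 = 0 := rfl
  have hw2 : (![0, 0, 0, 0, 0, T (-1)] : V) 2 = 0 := rfl
  have hw3 : (![0, 0, 0, 0, 0, T (-1)] : V) 3 = 0 := rfl
  have hw4 : (![0, 0, 0, 0, 0, T (-1)] : V) 4 = 0 := rfl
  have hw5 : (![0, 0, 0, 0, 0, T (-1)] : V) 5 = T (-1) := rfl
  refine ⟨?_, ?_, ?_, ?_⟩
  · -- E(w) ∈ B
    refine mem_B_suff k1 _ (fun n _ _ => ?_) (fun n _ _ => ?_) (fun n _ _ => ?_)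
      (fun n _ _ => ?_) ?_
    · simp [coeff_Eop, hw1, coeffL_zero]
    · simp [coeff_Eop, hw2, coeffL_zero]
    · simp [coeff_Eop, hw2, hw3, coeffL_zero]
    · simp [coeff_Eop, hw1, hw4, coeffL_zero]
    · rw [coeff_Eop]
      norm_num
  · -- F(w) ∈ B
    refine mem_B_suff k1 _ (fun n _ _ => ?_) (fun n _ _ => ?_) (fun n _ _ => ?_)
      (fun n _ _ => ?_) ?_
    · simp [coeff_F1, hw1, coeffL_zero]
    · simp [coeff_F2, hw2, coeffL_zero]
    · simp [coeff_F3, coeff_F2, hw2, hw3, coeffL_zero]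
    · simp [coeff_F4, coeff_F1, hw1, hw4, coeffL_zero]
    · rw [coeff_F5]
      have e : k1 + (2 - k1) + -1 - 1 = (0 : ℤ) := by ring
      rw [e, hw0, coeffL_zero]
      push_cast
      ring
  · -- w ∉ B
    intro hB
    have h := nec_coeff5 hB
    rw [hw5, coeffL_T, if_pos rfl] at h
    exact one_ne_zero h
  · -- classification
    intro z hEz hFz hzB
    by_cases hk0 : k1 = 0
    · -- case k = 0
      subst hk0
      have hne : ¬(coeffL (z 5) (-1) = 0 ∧ coeffL (z 3) (-1) = 0) := by
        rintro ⟨ha, hb⟩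
        apply hzB
        refine mem_B_suff 0 z (fun n h1 h2 => absurd h1 (by omega))
          (fun n h1 h2 => absurd h1 (by omega)) (fun n h1 h2 => ?_)
          (fun n h1 h2 => absurd h1 (by omega)) ha
        have hn : n = -1 := by omega
        subst hn
        rw [hb]
        push_cast
        ring
      have hz1 : ∀ n : ℤ, 2 - (0:ℤ) < n → n < 0 → coeffL (z 1) n = 0 :=
        fun n h1 h2 => absurd h1 (by omega)
      have hz2 : ∀ n : ℤ, (0:ℤ) < n → n < 0 → coeffL (z 2) n = 0 :=
        fun n h1 h2 => absurd h1 (by omega)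
      have hz4 : ∀ n : ℤ, -(0:ℤ) < n → n < 0 → coeffL (z 4) n - (if n = -1 then 0 else 0) =
          -(((2 - (0:ℤ) : ℤ)) : ℂ) * (if n + 1 < 0 then coeffL (z 1) (n + 1) else 0) :=
        fun n h1 h2 => absurd h1 (by omega)
      by_cases hA : coeffL (z 5) (-1) = 0
      · -- α = 0, β ≠ 0
        have hB : coeffL (z 3) (-1) ≠ 0 := fun h => hne ⟨hA, h⟩
        set b := coeffL (z 3) (-1) with hbdef
        have hMN : (!![(0:ℂ), 0, b⁻¹; 0, 1, 0; -b, 0, 0]) * !![0, 0, -b⁻¹; 0, 1, 0; b, 0, 0]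
            = 1 := by
          rw [Matrix.mul_fin_three, Matrix.one_fin_three]
          norm_num [mul_inv_cancel₀ hB, inv_mul_cancel₀ hB]
        have hNM : (!![(0:ℂ), 0, -b⁻¹; 0, 1, 0; b, 0, 0]) * !![0, 0, b⁻¹; 0, 1, 0; -b, 0, 0]
            = 1 := by
          rw [Matrix.mul_fin_three, Matrix.one_fin_three]
          norm_num [mul_inv_cancel₀ hB, inv_mul_cancel₀ hB]
        have hdM : ∀ p q : Fin 3, (![(0:ℤ), 2 - 0, 0]) q < (![(0:ℤ), 2 - 0, 0]) p →
            (!![(0:ℂ), 0, b⁻¹; 0, 1, 0; -b, 0, 0]) p q = 0 := by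
          intro p q hpq
          fin_cases p <;> fin_cases q <;> first | rfl | exact absurd hpq (by norm_num)
        have hdN : ∀ p q : Fin 3, (![(0:ℤ), 2 - 0, 0]) q < (![(0:ℤ), 2 - 0, 0]) p →
            (!![(0:ℂ), 0, -b⁻¹; 0, 1, 0; b, 0, 0]) p q = 0 := by
          intro p q hpq
          fin_cases p <;> fin_cases q <;> first | rfl | exact absurd hpq (by norm_num)
        refine ⟨mkG _ _ _ hMN hNM hdM hdN, ?_⟩
        rw [IntAct_mkG_w]
        have hdet : Matrix.det (!![(0:ℂ), 0, b⁻¹; 0, 1, 0; -b, 0, 0]) = 1 := by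
          simp [Matrix.det_fin_three, inv_mul_cancel₀ hB]
        rw [show (!![(0:ℂ), 0, -b⁻¹; 0, 1, 0; b, 0, 0]) 2 0 = b from rfl,
          show (!![(0:ℂ), 0, -b⁻¹; 0, 1, 0; b, 0, 0]) 2 1 = 0 from rfl,
          show (!![(0:ℂ), 0, -b⁻¹; 0, 1, 0; b, 0, 0]) 2 2 = 0 from rfl, hdet]
        refine mem_B_final 0 z _ _ _ hz1 hz2 (fun n h1 h2 => ?_)
          (fun n h1 h2 => absurd h1 (by omega)) (by rw [hA]; ring)
        have hn : n = -1 := by omega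
        subst hn
        rw [if_pos rfl, if_neg (by omega), ← hbdef]
        push_cast
        ring
      · -- α ≠ 0
        set a := coeffL (z 5) (-1) with hadef
        set b := coeffL (z 3) (-1) with hbdef
        have hMN : (!![a, 0, 0; 0, 1, 0; -b, 0, a⁻¹]) * !![a⁻¹, 0, 0; 0, 1, 0; b, 0, a]
            = 1 := by
          rw [Matrix.mul_fin_three, Matrix.one_fin_three]
          norm_num [mul_inv_cancel₀ hA, inv_mul_cancel₀ hA]
          ring
        have hNM : (!![a⁻¹, 0, 0; 0, 1, 0; b, 0, a]) * !![a, 0, 0; 0, 1, 0; -b, 0, a⁻¹]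
            = 1 := by
          rw [Matrix.mul_fin_three, Matrix.one_fin_three]
          norm_num [mul_inv_cancel₀ hA, inv_mul_cancel₀ hA]
          ring
        have hdM : ∀ p q : Fin 3, (![(0:ℤ), 2 - 0, 0]) q < (![(0:ℤ), 2 - 0, 0]) p →
            (!![a, 0, 0; 0, 1, 0; -b, 0, a⁻¹]) p q = 0 := by
          intro p q hpq
          fin_cases p <;> fin_cases q <;> first | rfl | exact absurd hpq (by norm_num)
        have hdN : ∀ p q : Fin 3, (![(0:ℤ), 2 - 0, 0]) q < (![(0:ℤ), 2 - 0, 0]) p →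
            (!![a⁻¹, 0, 0; 0, 1, 0; b, 0, a]) p q = 0 := by
          intro p q hpq
          fin_cases p <;> fin_cases q <;> first | rfl | exact absurd hpq (by norm_num)
        refine ⟨mkG _ _ _ hMN hNM hdM hdN, ?_⟩
        rw [IntAct_mkG_w]
        have hdet : Matrix.det (!![a, 0, 0; 0, 1, 0; -b, 0, a⁻¹]) = 1 := by
          simp [Matrix.det_fin_three, mul_inv_cancel₀ hA]
        rw [show (!![a⁻¹, 0, 0; 0, 1, 0; b, 0, a]) 2 0 = b from rfl,
          show (!![a⁻¹, 0, 0; 0, 1, 0; b, 0, a]) 2 1 = 0 from rfl,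
          show (!![a⁻¹, 0, 0; 0, 1, 0; b, 0, a]) 2 2 = a from rfl, hdet]
        refine mem_B_final 0 z _ _ _ hz1 hz2 (fun n h1 h2 => ?_)
          (fun n h1 h2 => absurd h1 (by omega)) (by rw [← hadef]; ring)
        have hn : n = -1 := by omega
        subst hn
        rw [if_pos rfl, if_neg (by omega), ← hbdef]
        push_cast
        ring
    · by_cases hk2c : k1 = 2
      · -- case k = 2
        subst hk2c
        have hne : ¬(coeffL (z 5) (-1) = 0 ∧ coeffL (z 4) (-1) = 0) := by
          rintro ⟨ha, hb⟩
          apply hzB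
          refine mem_B_suff 2 z (fun n h1 h2 => absurd h1 (by omega))
            (fun n h1 h2 => absurd h1 (by omega)) (fun n h1 h2 => absurd h1 (by omega))
            (fun n h1 h2 => ?_) ha
          have hn : n = -1 := by omega
          subst hn
          rw [hb]
          push_cast
          ring
        have hz1 : ∀ n : ℤ, 2 - (2:ℤ) < n → n < 0 → coeffL (z 1) n = 0 :=
          fun n h1 h2 => absurd h1 (by omega)
        have hz2 : ∀ n : ℤ, (2:ℤ) < n → n < 0 → coeffL (z 2) n = 0 :=
          fun n h1 h2 => absurd h1 (by omega)
        have hz3 : ∀ n : ℤ, (2:ℤ) - 2 < n → n < 0 → coeffL (z 3) n - (if n = -1 then 0 else 0) =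
            ((2:ℤ) : ℂ) * (if n + 1 < 0 then coeffL (z 2) (n + 1) else 0) :=
          fun n h1 h2 => absurd h1 (by omega)
        by_cases hA : coeffL (z 5) (-1) = 0
        · have hB : coeffL (z 4) (-1) ≠ 0 := fun h => hne ⟨hA, h⟩
          set b := coeffL (z 4) (-1) with hbdef
          have hMN : (!![(1:ℂ), 0, 0; 0, 0, b⁻¹; 0, -b, 0]) * !![1, 0, 0; 0, 0, -b⁻¹; 0, b, 0]
              = 1 := by
            rw [Matrix.mul_fin_three, Matrix.one_fin_three]
            norm_num [mul_inv_cancel₀ hB, inv_mul_cancel₀ hB]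
          have hNM : (!![(1:ℂ), 0, 0; 0, 0, -b⁻¹; 0, b, 0]) * !![1, 0, 0; 0, 0, b⁻¹; 0, -b, 0]
              = 1 := by
            rw [Matrix.mul_fin_three, Matrix.one_fin_three]
            norm_num [mul_inv_cancel₀ hB, inv_mul_cancel₀ hB]
          have hdM : ∀ p q : Fin 3, (![(2:ℤ), 2 - 2, 0]) q < (![(2:ℤ), 2 - 2, 0]) p →
              (!![(1:ℂ), 0, 0; 0, 0, b⁻¹; 0, -b, 0]) p q = 0 := by
            intro p q hpq
            fin_cases p <;> fin_cases q <;> first | rfl | exact absurd hpq (by norm_num)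
          have hdN : ∀ p q : Fin 3, (![(2:ℤ), 2 - 2, 0]) q < (![(2:ℤ), 2 - 2, 0]) p →
              (!![(1:ℂ), 0, 0; 0, 0, -b⁻¹; 0, b, 0]) p q = 0 := by
            intro p q hpq
            fin_cases p <;> fin_cases q <;> first | rfl | exact absurd hpq (by norm_num)
          refine ⟨mkG _ _ _ hMN hNM hdM hdN, ?_⟩
          rw [IntAct_mkG_w]
          have hdet : Matrix.det (!![(1:ℂ), 0, 0; 0, 0, b⁻¹; 0, -b, 0]) = 1 := by
            simp [Matrix.det_fin_three, inv_mul_cancel₀ hB]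
          rw [show (!![(1:ℂ), 0, 0; 0, 0, -b⁻¹; 0, b, 0]) 2 0 = 0 from rfl,
            show (!![(1:ℂ), 0, 0; 0, 0, -b⁻¹; 0, b, 0]) 2 1 = b from rfl,
            show (!![(1:ℂ), 0, 0; 0, 0, -b⁻¹; 0, b, 0]) 2 2 = 0 from rfl, hdet]
          refine mem_B_final 2 z _ _ _ hz1 hz2 (fun n h1 h2 => absurd h1 (by omega))
            (fun n h1 h2 => ?_) (by rw [hA]; ring)
          have hn : n = -1 := by omega
          subst hn
          rw [if_pos rfl, if_neg (by omega), ← hbdef]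
          push_cast
          ring
        · set a := coeffL (z 5) (-1) with hadef
          set b := coeffL (z 4) (-1) with hbdef
          have hMN : (!![(1:ℂ), 0, 0; 0, a, 0; 0, -b, a⁻¹]) * !![1, 0, 0; 0, a⁻¹, 0; 0, b, a]
              = 1 := by
            rw [Matrix.mul_fin_three, Matrix.one_fin_three]
            norm_num [mul_inv_cancel₀ hA, inv_mul_cancel₀ hA]
            ring
          have hNM : (!![(1:ℂ), 0, 0; 0, a⁻¹, 0; 0, b, a]) * !![1, 0, 0; 0, a, 0; 0, -b, a⁻¹]
              = 1 := by
            rw [Matrix.mul_fin_three, Matrix.one_fin_three]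
            norm_num [mul_inv_cancel₀ hA, inv_mul_cancel₀ hA]
            ring
          have hdM : ∀ p q : Fin 3, (![(2:ℤ), 2 - 2, 0]) q < (![(2:ℤ), 2 - 2, 0]) p →
              (!![(1:ℂ), 0, 0; 0, a, 0; 0, -b, a⁻¹]) p q = 0 := by
            intro p q hpq
            fin_cases p <;> fin_cases q <;> first | rfl | exact absurd hpq (by norm_num)
          have hdN : ∀ p q : Fin 3, (![(2:ℤ), 2 - 2, 0]) q < (![(2:ℤ), 2 - 2, 0]) p →
              (!![(1:ℂ), 0, 0; 0, a⁻¹, 0; 0, b, a]) p q = 0 := by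
            intro p q hpq
            fin_cases p <;> fin_cases q <;> first | rfl | exact absurd hpq (by norm_num)
          refine ⟨mkG _ _ _ hMN hNM hdM hdN, ?_⟩
          rw [IntAct_mkG_w]
          have hdet : Matrix.det (!![(1:ℂ), 0, 0; 0, a, 0; 0, -b, a⁻¹]) = 1 := by
            simp [Matrix.det_fin_three, mul_inv_cancel₀ hA]
          rw [show (!![(1:ℂ), 0, 0; 0, a⁻¹, 0; 0, b, a]) 2 0 = 0 from rfl,
            show (!![(1:ℂ), 0, 0; 0, a⁻¹, 0; 0, b, a]) 2 1 = b from rfl,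
            show (!![(1:ℂ), 0, 0; 0, a⁻¹, 0; 0, b, a]) 2 2 = a from rfl, hdet]
          refine mem_B_final 2 z _ _ _ hz1 hz2 (fun n h1 h2 => absurd h1 (by omega))
            (fun n h1 h2 => ?_) (by rw [← hadef]; ring)
          have hn : n = -1 := by omega
          subst hn
          rw [if_pos rfl, if_neg (by omega), ← hbdef]
          push_cast
          ring
      · -- general case k ∉ {0, 2}
        have hz1 : ∀ n : ℤ, 2 - k1 < n → n < 0 → coeffL (z 1) n = 0 := by
          intro n h1 h2
          by_cases hk3 : 3 ≤ k1
          · exact (sector2 hk3 hkne4 hEz hFz).1 n h1 h2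
          · exact absurd h1 (by omega)
        have hz2 : ∀ n : ℤ, k1 < n → n < 0 → coeffL (z 2) n = 0 := by
          intro n h1 h2
          by_cases hk1' : k1 ≤ -1
          · exact (sector1 hk1' hkne2 hEz hFz).1 n h1 h2
          · exact absurd h1 (by omega)
        have hz3 : ∀ n : ℤ, k1 - 2 < n → n < 0 →
            coeffL (z 3) n = (k1 : ℂ) * (if n + 1 < 0 then coeffL (z 2) (n + 1) else 0) := by
          intro n h1 h2
          by_cases hk1' : k1 ≤ -1
          · exact (sector1 hk1' hkne2 hEz hFz).2 n h1 h2
          · exact absurd h1 (by omega)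
        have hz4 : ∀ n : ℤ, -k1 < n → n < 0 →
            coeffL (z 4) n = -(((2 - k1 : ℤ)) : ℂ) *
              (if n + 1 < 0 then coeffL (z 1) (n + 1) else 0) := by
          intro n h1 h2
          by_cases hk3 : 3 ≤ k1
          · exact (sector2 hk3 hkne4 hEz hFz).2 n h1 h2
          · exact absurd h1 (by omega)
        have hA : coeffL (z 5) (-1) ≠ 0 := by
          intro h0
          exact hzB (mem_B_suff k1 z hz1 hz2 hz3 hz4 h0)
        set a := coeffL (z 5) (-1) with hadef
        have hMN : (!![a, 0, 0; 0, 1, 0; 0, 0, 1]) * !![a⁻¹, 0, 0; 0, 1, 0; 0, 0, 1] = 1 := by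
          rw [Matrix.mul_fin_three, Matrix.one_fin_three]
          norm_num [mul_inv_cancel₀ hA]
        have hNM : (!![a⁻¹, 0, 0; 0, 1, 0; 0, 0, 1]) * !![a, 0, 0; 0, 1, 0; 0, 0, 1] = 1 := by
          rw [Matrix.mul_fin_three, Matrix.one_fin_three]
          norm_num [inv_mul_cancel₀ hA]
        have hdM : ∀ p q : Fin 3, (![k1, 2 - k1, 0]) q < (![k1, 2 - k1, 0]) p →
            (!![a, 0, 0; 0, 1, 0; 0, 0, 1]) p q = 0 := by
          intro p q hpq
          fin_cases p <;> fin_cases q <;> first | rfl | exact absurd hpq (by norm_num)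
        have hdN : ∀ p q : Fin 3, (![k1, 2 - k1, 0]) q < (![k1, 2 - k1, 0]) p →
            (!![a⁻¹, 0, 0; 0, 1, 0; 0, 0, 1]) p q = 0 := by
          intro p q hpq
          fin_cases p <;> fin_cases q <;> first | rfl | exact absurd hpq (by norm_num)
        refine ⟨mkG _ _ _ hMN hNM hdM hdN, ?_⟩
        rw [IntAct_mkG_w]
        have hdet : Matrix.det (!![a, 0, 0; 0, 1, 0; 0, 0, 1]) = a := by
          simp [Matrix.det_fin_three]
        rw [show (!![a⁻¹, 0, 0; 0, 1, 0; 0, 0, 1]) 2 0 = 0 from rfl,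
          show (!![a⁻¹, 0, 0; 0, 1, 0; 0, 0, 1]) 2 1 = 0 from rfl,
          show (!![a⁻¹, 0, 0; 0, 1, 0; 0, 0, 1]) 2 2 = 1 from rfl, hdet]
        refine mem_B_final k1 z _ _ _ hz1 hz2 (fun n h1 h2 => ?_) (fun n h1 h2 => ?_)
          (by rw [← hadef]; ring)
        · rw [hz3 n h1 h2]
          have hn : n ≠ -1 ∨ (a * 0 : ℂ) = 0 := Or.inr (mul_zero a)
          by_cases hc : n = -1 <;> simp [hc]
        · rw [hz4 n h1 h2]
          by_cases hc : n = -1 <;> simp [hc]
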